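/- Generalized SBS theorem: Let ρ be a density matrix on ℂ^d ⊗ (ℂ^{D_1} ⊗ ⋯ ⊗ ℂ^{D_N}). The following are equivalent. (i) There exist a finite index set I, an orthonormal family {e_i}_{i∈I} in ℂ^d, and for each k ∈ {1,…,N} orthogonal projectors {Π_i^k}_{i∈I} on ℂ^{D_k} with Π_i^k Π_j^k = 0 for i ≠ j, such that ∑_{i∈I} (|e_i⟩⟨e_i| ⊗ Π_i^1 ⊗ ⋯ ⊗ Π_i^N) ρ (|e_i⟩⟨e_i| ⊗ Π_i^1 ⊗ ⋯ ⊗ Π_i^N) = ρ. (ii) There exist a finite index set I, an orthonormal family {e_i}_{i∈I} in ℂ^d, probabilities p_i, and density matrices ϱ_i on ℂ^{D_1} ⊗ ⋯ ⊗ ℂ^{D_N} such that ρ = ∑_i p_i |e_i⟩⟨e_i| ⊗ ϱ_i and, for every nonempty subset K ⊆ {1,…,N}, the reductions ϱ_i^K (partial trace over the complement of K) satisfy ϱ_i^K ϱ_j^K = 0 whenever i ≠ j and p_i, p_j > 0. -/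

import Mathlib

open scoped Kronecker Matrix ComplexOrder BigOperators
open Matrix

noncomputable section

/-- The rank-one operator `|v⟩⟨w| = v wᴴ`. -/
def ketBra {n : Type*} (v w : n → ℂ) : Matrix n n ℂ := Matrix.vecMulVec v (star w)

/-- A density matrix: positive semidefinite with unit trace. -/
def IsDensityMatrix {n : Type*} [Fintype n] (ρ : Matrix n n ℂ) : Prop :=
  ρ.PosSemidef ∧ ρ.trace = 1

/-- An orthonormal family of vectors. -/
def OrthonormalFamily {n I : Type*} [Fintype n] [DecidableEq I] (e : I → n → ℂ) : Prop :=
  ∀ i j, star (e i) ⬝ᵥ e j = (if i = j then 1 else 0)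

/-- The `N`-fold Kronecker (tensor) product of a family of matrices. -/
def tensorFamily {N : ℕ} {D : Fin N → ℕ} (M : ∀ k, Matrix (Fin (D k)) (Fin (D k)) ℂ) :
    Matrix (∀ k, Fin (D k)) (∀ k, Fin (D k)) ℂ :=
  fun a a' => ∏ k, M k (a k) (a' k)

/-- The Kronecker (tensor) product of the matrices `M k` over the factors `k ∈ K`. -/
def tensorOn {N : ℕ} {D : Fin N → ℕ} (K : Finset (Fin N))
    (M : ∀ k, Matrix (Fin (D k)) (Fin (D k)) ℂ) :
    Matrix (∀ k : K, Fin (D k.1)) (∀ k : K, Fin (D k.1)) ℂ :=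
  fun a a' => ∏ k : K, M k.1 (a k) (a' k)

/-- The partial trace of a matrix on an `N`-fold tensor product over all
tensor factors *not* in `K` (entrywise: sum over equal indices in the traced factors). -/
def reduceTo {N : ℕ} {D : Fin N → ℕ} (K : Finset (Fin N))
    (M : Matrix (∀ k, Fin (D k)) (∀ k, Fin (D k)) ℂ) :
    Matrix (∀ k : K, Fin (D k.1)) (∀ k : K, Fin (D k.1)) ℂ :=
  fun a a' => ∑ b : ∀ k : {k : Fin N // k ∉ K}, Fin (D k.1),
    M (fun k => if h : k ∈ K then a ⟨k, h⟩ else b ⟨k, h⟩)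
      (fun k => if h : k ∈ K then a' ⟨k, h⟩ else b ⟨k, h⟩)

/-- The single-party reduction: the partial trace over all tensor factors except the `k`-th. -/
def reduceSingle {N : ℕ} {D : Fin N → ℕ} (k : Fin N)
    (M : Matrix (∀ l, Fin (D l)) (∀ l, Fin (D l)) ℂ) :
    Matrix (Fin (D k)) (Fin (D k)) ℂ :=
  fun a a' => ∑ b : ∀ l : {l : Fin N // l ≠ k}, Fin (D l.1),
    M (fun l => if h : l = k then cast (congrArg (fun i => Fin (D i)) h.symm) a else b ⟨l, h⟩)
      (fun l => if h : l = k then cast (congrArg (fun i => Fin (D i)) h.symm) a' else b ⟨l, h⟩)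

namespace SBSAux
section


variable {n : Type*} [Fintype n] [DecidableEq n]

/-- Support projector of a Hermitian matrix. -/
def suppProj {r : Matrix n n ℂ} (hr : r.IsHermitian) : Matrix n n ℂ :=
  (hr.eigenvectorUnitary : Matrix n n ℂ) *
    diagonal (fun a => if hr.eigenvalues a = 0 then (0:ℂ) else 1) *
    (star (hr.eigenvectorUnitary : Matrix n n ℂ))

lemma suppProj_idem {r : Matrix n n ℂ} (hr : r.IsHermitian) :
    suppProj hr * suppProj hr = suppProj hr := by
  set U : Matrix n n ℂ := (hr.eigenvectorUnitary : Matrix n n ℂ) with hUdef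
  set g : n → ℂ := fun a => if hr.eigenvalues a = 0 then (0:ℂ) else 1 with hg
  have hU : star U * U = 1 := Unitary.coe_star_mul_self _
  have hgg : (fun i => g i * g i) = g := by
    funext a
    by_cases h : hr.eigenvalues a = 0 <;> simp [hg, h]
  show U * diagonal g * star U * (U * diagonal g * star U) = U * diagonal g * star U
  calc U * diagonal g * star U * (U * diagonal g * star U)
      = U * (diagonal g * (star U * U) * diagonal g) * star U := by
        simp only [Matrix.mul_assoc]
    _ = U * diagonal g * star U := by
        rw [hU, Matrix.mul_one, diagonal_mul_diagonal, hgg]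

lemma suppProj_herm {r : Matrix n n ℂ} (hr : r.IsHermitian) :
    (suppProj hr)ᴴ = suppProj hr := by
  set U : Matrix n n ℂ := (hr.eigenvectorUnitary : Matrix n n ℂ) with hUdef
  set g : n → ℂ := fun a => if hr.eigenvalues a = 0 then (0:ℂ) else 1 with hg
  have hstar : star g = g := by
    funext a
    by_cases h : hr.eigenvalues a = 0 <;> simp [hg, h, Pi.star_apply]
  show (U * diagonal g * star U)ᴴ = U * diagonal g * star U
  rw [conjTranspose_mul, conjTranspose_mul, diagonal_conjTranspose, hstar]
  simp only [star_eq_conjTranspose, conjTranspose_conjTranspose, Matrix.mul_assoc]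

lemma suppProj_mul_self {r : Matrix n n ℂ} (hr : r.IsHermitian) :
    suppProj hr * r = r := by
  set U : Matrix n n ℂ := (hr.eigenvectorUnitary : Matrix n n ℂ) with hUdef
  set g : n → ℂ := fun a => if hr.eigenvalues a = 0 then (0:ℂ) else 1 with hg
  set lam : n → ℂ := RCLike.ofReal ∘ hr.eigenvalues with hlam
  have hU : star U * U = 1 := Unitary.coe_star_mul_self _
  have hgl : (fun i => g i * lam i) = lam := by
    funext a
    by_cases h : hr.eigenvalues a = 0 <;> simp [hg, hlam, h, Function.comp]
  have key : (U * diagonal g * star U) * (U * diagonal lam * star U)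
      = U * diagonal lam * star U := by
    calc (U * diagonal g * star U) * (U * diagonal lam * star U)
        = U * (diagonal g * (star U * U) * diagonal lam) * star U := by
          simp only [Matrix.mul_assoc]
      _ = U * diagonal lam * star U := by
          rw [hU, Matrix.mul_one, diagonal_mul_diagonal, hgl]
  calc suppProj hr * r
      = (U * diagonal g * star U) * (U * diagonal lam * star U) := by
        rw [← (show r = U * diagonal lam * star U from hr.spectral_theorem)]; rfl
    _ = U * diagonal lam * star U := key
    _ = r := by rw [← (show r = U * diagonal lam * star U from hr.spectral_theorem)]

lemma suppProj_mul_eq_zero {r : Matrix n n ℂ} (hr : r.IsHermitian)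
    {M : Matrix n n ℂ} (hM : r * M = 0) : suppProj hr * M = 0 := by
  set U : Matrix n n ℂ := (hr.eigenvectorUnitary : Matrix n n ℂ) with hUdef
  set g : n → ℂ := fun a => if hr.eigenvalues a = 0 then (0:ℂ) else 1 with hg
  set lam : n → ℂ := RCLike.ofReal ∘ hr.eigenvalues with hlam
  have hU : star U * U = 1 := Unitary.coe_star_mul_self _
  have h1 : diagonal lam * (star U * M) = 0 := by
    have h0 : star U * ((U * diagonal lam * star U) * M) = 0 := by
      rw [← (show r = U * diagonal lam * star U from hr.spectral_theorem)]
      rw [hM, Matrix.mul_zero]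
    calc diagonal lam * (star U * M)
        = star U * ((U * diagonal lam * star U) * M) := by
          simp only [Matrix.mul_assoc, ← Matrix.mul_assoc (star U) U, hU, Matrix.one_mul]
      _ = 0 := h0
  have h2 : diagonal g * (star U * M) = 0 := by
    ext a c
    have h1' := congrFun (congrFun h1 a) c
    simp only [diagonal_mul, Matrix.zero_apply] at h1' ⊢
    by_cases h : hr.eigenvalues a = 0
    · simp [hg, h]
    · have hne : lam a ≠ 0 := by simp [hlam, Function.comp, h]
      have : (star U * M) a c = 0 := by
        exact (mul_eq_zero.mp h1').resolve_left hne
      simp [hg, h, this]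
  calc suppProj hr * M
      = U * (diagonal g * (star U * M)) := by
        show U * diagonal g * star U * M = _
        simp only [Matrix.mul_assoc]
    _ = 0 := by rw [h2, Matrix.mul_zero]


end
section


variable {n : Type*} [Fintype n] [DecidableEq n]

lemma psd_eq_zero_of_trace_eq_zero {A : Matrix n n ℂ} (hA : A.PosSemidef)
    (h : A.trace = 0) : A = 0 := by
  obtain ⟨B, rfl⟩ : ∃ B : Matrix n n ℂ, A = Bᴴ * B := by
    open scoped MatrixOrder Matrix.Norms.L2Operator in
    exact CStarAlgebra.nonneg_iff_eq_star_mul_self.mp hA.nonneg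
  suffices hB : B = 0 by rw [hB]; simp
  have hdiag : ∀ j, (Bᴴ * B) j j = star (fun i => B i j) ⬝ᵥ (fun i => B i j) := by
    intro j
    simp [Matrix.mul_apply, dotProduct, Matrix.conjTranspose_apply]
  have hnn : ∀ j ∈ Finset.univ, (0:ℂ) ≤ (Bᴴ * B) j j := by
    intro j _
    rw [hdiag j]
    exact dotProduct_star_self_nonneg _
  have := (Finset.sum_eq_zero_iff_of_nonneg hnn).mp h
  ext i j
  have hj := this j (Finset.mem_univ j)
  rw [hdiag j] at hj
  have := dotProduct_star_self_eq_zero.mp hj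
  exact congrFun this i

lemma psd_diag_nonneg {A : Matrix n n ℂ} (hA : A.PosSemidef) (a : n) :
    (0:ℂ) ≤ A a a := by
  have := hA.dotProduct_mulVec_nonneg (Pi.single a 1)
  simpa [dotProduct, Matrix.mulVec, Pi.single_apply, Finset.sum_ite_eq,
    Finset.sum_ite_eq'] using this

lemma psd_trace_coe_re {A : Matrix n n ℂ} (hA : A.PosSemidef) :
    ((A.trace.re : ℝ) : ℂ) = A.trace ∧ 0 ≤ A.trace.re := by
  have h : (0:ℂ) ≤ A.trace := by
    apply Finset.sum_nonneg
    intro a _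
    exact psd_diag_nonneg hA a
  rw [Complex.le_def] at h
  simp only [Complex.zero_re, Complex.zero_im] at h
  constructor
  · apply Complex.ext <;> simp [h.2.symm]
  · exact h.1

lemma psd_smul_real {A : Matrix n n ℂ} (hA : A.PosSemidef) {c : ℝ} (hc : 0 ≤ c) :
    ((c:ℂ) • A).PosSemidef := by
  have key : (c:ℂ) • A = ((Real.sqrt c : ℂ) • (1 : Matrix n n ℂ))ᴴ * A *
      ((Real.sqrt c : ℂ) • (1 : Matrix n n ℂ)) := by
    rw [conjTranspose_smul, conjTranspose_one]
    rw [Matrix.smul_mul, Matrix.one_mul, Matrix.mul_smul, Matrix.mul_one]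
    rw [smul_smul]
    congr 1
    rw [Complex.star_def, Complex.conj_ofReal, ← Complex.ofReal_mul, Real.mul_self_sqrt hc]
  rw [key]
  exact hA.conjTranspose_mul_mul_same _

lemma psd_sandwich_zero {A P : Matrix n n ℂ} (hA : A.PosSemidef)
    (hP : Pᴴ = P) (h : P * A * P = 0) : A * P = 0 := by
  obtain ⟨B, rfl⟩ : ∃ B : Matrix n n ℂ, A = Bᴴ * B := by
    open scoped MatrixOrder Matrix.Norms.L2Operator in
    exact CStarAlgebra.nonneg_iff_eq_star_mul_self.mp hA.nonneg
  have : (B * P)ᴴ * (B * P) = 0 := by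
    rw [conjTranspose_mul, hP]
    calc P * Bᴴ * (B * P) = P * (Bᴴ * B) * P := by simp only [Matrix.mul_assoc]
      _ = 0 := h
  have hBP : B * P = 0 := conjTranspose_mul_self_eq_zero.mp this
  calc Bᴴ * B * P = Bᴴ * (B * P) := by rw [Matrix.mul_assoc]
    _ = 0 := by rw [hBP, Matrix.mul_zero]


end
section


variable {E : Type*} [Fintype E] [DecidableEq E]

lemma kron_conjT {m n p q : Type*} (A : Matrix m n ℂ) (B : Matrix p q ℂ) :
    (A ⊗ₖ B)ᴴ = Aᴴ ⊗ₖ Bᴴ := by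
  ext ⟨a, b⟩ ⟨c, d⟩
  simp [Matrix.conjTranspose_apply, Matrix.kroneckerMap_apply, mul_comm]

/-- the equivalence `E ≃ Unit × E`. -/
def eP (E : Type*) : E ≃ Unit × E where
  toFun a := ((), a)
  invFun x := x.2
  left_inv a := rfl
  right_inv x := rfl

/-- strip the `Unit` factor -/
def unP (Y : Matrix (Unit × E) (Unit × E) ℂ) : Matrix E E ℂ :=
  Y.submatrix (eP E) (eP E)

lemma punit_expand (Y : Matrix (Unit × E) (Unit × E) ℂ) :
    (1 : Matrix Unit Unit ℂ) ⊗ₖ unP Y = Y := by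
  ext ⟨u, a⟩ ⟨u', b⟩
  cases u; cases u'
  simp [unP, eP, Matrix.kroneckerMap_apply]

lemma unP_mul (X Y : Matrix (Unit × E) (Unit × E) ℂ) :
    unP (X * Y) = unP X * unP Y :=
  (Matrix.submatrix_mul_equiv X Y (eP E) (eP E) (eP E)).symm

lemma unP_one_kron (T : Matrix E E ℂ) :
    unP ((1 : Matrix Unit Unit ℂ) ⊗ₖ T) = T := by
  ext a b
  simp [unP, eP, Matrix.kroneckerMap_apply]

lemma unP_posSemidef {Y : Matrix (Unit × E) (Unit × E) ℂ} (hY : Y.PosSemidef) :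
    (unP Y).PosSemidef := hY.submatrix _

lemma unP_trace (Y : Matrix (Unit × E) (Unit × E) ℂ) :
    (unP Y).trace = Y.trace := by
  unfold unP Matrix.trace
  exact Fintype.sum_equiv (eP E) _ _ (fun a => rfl)

lemma ketBra_eq (v w : E → ℂ) :
    ketBra v w = replicateCol Unit v * (replicateCol Unit w)ᴴ := by
  rw [ketBra, Matrix.vecMulVec_eq Unit, Matrix.conjTranspose_replicateCol]

lemma ketBra_herm (v : E → ℂ) : (ketBra v v)ᴴ = ketBra v v := by
  rw [ketBra_eq, conjTranspose_mul, conjTranspose_conjTranspose]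

lemma trace_ketBra (v w : E → ℂ) : (ketBra v w).trace = star w ⬝ᵥ v := by
  unfold ketBra Matrix.trace
  simp [Matrix.vecMulVec_apply, dotProduct, mul_comm, Matrix.diag]

lemma ketBra_mul_ketBra (v w x y : E → ℂ) :
    ketBra v w * ketBra x y = (star w ⬝ᵥ x) • ketBra v y := by
  ext a b
  simp only [ketBra, Matrix.mul_apply, Matrix.vecMulVec_apply, Matrix.smul_apply,
    dotProduct, Pi.star_apply, smul_eq_mul, Finset.sum_mul]
  exact Finset.sum_congr rfl fun t _ => by ring

lemma col_herm_mul_col {v : E → ℂ} (hv : star v ⬝ᵥ v = 1) :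
    (replicateCol Unit v)ᴴ * replicateCol Unit v = 1 := by
  ext u u'
  cases u; cases u'
  simp only [Matrix.mul_apply, Matrix.conjTranspose_apply, Matrix.replicateCol_apply]
  rw [show (1 : Matrix Unit Unit ℂ) () () = 1 from rfl]
  simpa [dotProduct, Pi.star_apply] using hv


end
section


variable {N : ℕ} {D : Fin N → ℕ}

lemma tensorFamily_mul (M M' : ∀ k, Matrix (Fin (D k)) (Fin (D k)) ℂ) :
    tensorFamily M * tensorFamily M' = tensorFamily (fun k => M k * M' k) := by
  ext a b
  rw [Matrix.mul_apply]
  unfold tensorFamily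
  rw [show (∏ k, (M k * M' k) (a k) (b k)) = ∏ k, ∑ x, M k (a k) x * M' k x (b k) from
    Finset.prod_congr rfl fun k _ => Matrix.mul_apply]
  rw [Fintype.prod_sum]
  exact Finset.sum_congr rfl fun c _ => (Finset.prod_mul_distrib).symm

lemma tensorFamily_one : tensorFamily (fun k => (1 : Matrix (Fin (D k)) (Fin (D k)) ℂ)) = 1 := by
  ext a b
  unfold tensorFamily
  by_cases h : a = b
  · subst h
    simp [Matrix.one_apply]
  · obtain ⟨k, hk⟩ : ∃ k, a k ≠ b k := by
      by_contra hc
      push_neg at hc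
      exact h (funext hc)
    rw [Matrix.one_apply_ne h]
    exact Finset.prod_eq_zero (Finset.mem_univ k) (Matrix.one_apply_ne hk)

lemma tensorFamily_congr {M M' : ∀ k, Matrix (Fin (D k)) (Fin (D k)) ℂ}
    (h : ∀ k, M k = M' k) : tensorFamily M = tensorFamily M' := by
  have : M = M' := funext h
  rw [this]

lemma tensorFamily_conjT (M : ∀ k, Matrix (Fin (D k)) (Fin (D k)) ℂ) :
    (tensorFamily M)ᴴ = tensorFamily (fun k => (M k)ᴴ) := by
  ext a b
  unfold tensorFamily
  show star (∏ k, M k (b k) (a k)) = _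
  rw [star_prod]
  exact Finset.prod_congr rfl fun k _ => rfl

lemma tensorOn_mul (K : Finset (Fin N)) (M M' : ∀ k, Matrix (Fin (D k)) (Fin (D k)) ℂ) :
    tensorOn K M * tensorOn K M' = tensorOn K (fun k => M k * M' k) := by
  ext a b
  rw [Matrix.mul_apply]
  unfold tensorOn
  rw [show (∏ k : K, (M k.1 * M' k.1) (a k) (b k)) = ∏ k : K, ∑ x, M k.1 (a k) x * M' k.1 x (b k)
    from Finset.prod_congr rfl fun k _ => Matrix.mul_apply]
  rw [Fintype.prod_sum]
  exact Finset.sum_congr rfl fun c _ => (Finset.prod_mul_distrib).symm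

lemma tensorOn_conjT (K : Finset (Fin N)) (M : ∀ k, Matrix (Fin (D k)) (Fin (D k)) ℂ) :
    (tensorOn K M)ᴴ = tensorOn K (fun k => (M k)ᴴ) := by
  ext a b
  unfold tensorOn
  show star (∏ k : K, M k.1 (b k) (a k)) = _
  rw [star_prod]
  exact Finset.prod_congr rfl fun k _ => rfl

lemma tensorOn_congr {K : Finset (Fin N)} {M M' : ∀ k, Matrix (Fin (D k)) (Fin (D k)) ℂ}
    (h : ∀ k ∈ K, M k = M' k) : tensorOn K M = tensorOn K M' := by
  ext a b
  exact Finset.prod_congr rfl fun k _ => by rw [h k.1 k.2]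

lemma tensorOn_eq_zero {K : Finset (Fin N)} (hK : K.Nonempty)
    {M : ∀ k, Matrix (Fin (D k)) (Fin (D k)) ℂ} (h : ∀ k ∈ K, M k = 0) :
    tensorOn K M = 0 := by
  obtain ⟨k, hk⟩ := hK
  ext a b
  rw [Matrix.zero_apply]
  exact Finset.prod_eq_zero (Finset.mem_univ (⟨k, hk⟩ : K)) (by rw [h k hk]; rfl)


end
section


variable {N : ℕ} {D : Fin N → ℕ}

/-- glue -/
def glue (K : Finset (Fin N)) (a : ∀ k : K, Fin (D k.1))
    (b : ∀ k : {k : Fin N // k ∉ K}, Fin (D k.1)) : ∀ k, Fin (D k) :=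
  fun k => if h : k ∈ K then a ⟨k, h⟩ else b ⟨k, h⟩

lemma reduceTo_apply (K : Finset (Fin N)) (M : Matrix (∀ k, Fin (D k)) (∀ k, Fin (D k)) ℂ)
    (a a' : ∀ k : K, Fin (D k.1)) :
    reduceTo K M a a' = ∑ b : ∀ k : {k : Fin N // k ∉ K}, Fin (D k.1),
      M (glue K a b) (glue K a' b) := rfl

lemma reduceTo_conjT (K : Finset (Fin N)) (M : Matrix (∀ k, Fin (D k)) (∀ k, Fin (D k)) ℂ) :
    reduceTo K (Mᴴ) = (reduceTo K M)ᴴ := by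
  ext a b
  simp [reduceTo_apply, Matrix.conjTranspose_apply, star_sum]

lemma reduceTo_smul (K : Finset (Fin N)) (c : ℂ) (M : Matrix (∀ k, Fin (D k)) (∀ k, Fin (D k)) ℂ) :
    reduceTo K (c • M) = c • reduceTo K M := by
  ext a b
  simp [reduceTo_apply, glue, Finset.mul_sum]

lemma trace_reduceTo (K : Finset (Fin N)) (M : Matrix (∀ k, Fin (D k)) (∀ k, Fin (D k)) ℂ) :
    (reduceTo K M).trace = M.trace := by
  unfold Matrix.trace Matrix.diag
  rw [show (∑ a : ∀ k : K, Fin (D k.1), reduceTo K M a a)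
      = ∑ p : (∀ k : K, Fin (D k.1)) × (∀ k : {k : Fin N // k ∉ K}, Fin (D k.1)),
        M (glue K p.1 p.2) (glue K p.1 p.2) by
    rw [Fintype.sum_prod_type]
    exact Finset.sum_congr rfl fun a _ => reduceTo_apply K M a a]
  exact Equiv.sum_comp (Equiv.piEquivPiSubtypeProd (· ∈ K) (fun k => Fin (D k))).symm
    (fun c => M c c)

lemma glue_prod_eq (K : Finset (Fin N)) (M : ∀ k, Matrix (Fin (D k)) (Fin (D k)) ℂ)
    (hM : ∀ l ∉ K, M l = 1)
    (a γ : ∀ k : K, Fin (D k.1)) (b δ : ∀ k : {k : Fin N // k ∉ K}, Fin (D k.1)) :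
    ∏ l, M l (glue K a b l) (glue K γ δ l)
      = tensorOn K M a γ * (if b = δ then 1 else 0) := by
  rw [← Finset.prod_mul_prod_compl K (fun l => M l (glue K a b l) (glue K γ δ l))]
  congr 1
  · -- product over K
    unfold tensorOn
    rw [← Finset.prod_coe_sort K (fun l => M l (glue K a b l) (glue K γ δ l))]
    exact Finset.prod_congr rfl fun l _ => by
      unfold glue
      rw [dif_pos l.2, dif_pos l.2]
  · -- product over Kᶜ
    by_cases h : b = δ
    · subst h
      rw [if_pos rfl]
      apply Finset.prod_eq_one
      intro l hl
      have hl' : l ∉ K := Finset.mem_compl.mp hl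
      unfold glue
      rw [dif_neg hl', dif_neg hl', hM l hl', Matrix.one_apply_eq]
    · rw [if_neg h]
      obtain ⟨l₀, hl₀⟩ : ∃ l₀ : {k : Fin N // k ∉ K}, b l₀ ≠ δ l₀ := by
        by_contra hc
        push_neg at hc
        exact h (funext hc)
      refine Finset.prod_eq_zero (Finset.mem_compl.mpr l₀.2) ?_
      unfold glue
      rw [dif_neg l₀.2, dif_neg l₀.2, hM l₀.1 l₀.2]
      exact Matrix.one_apply_ne hl₀

lemma reduceTo_tf_mul (K : Finset (Fin N)) (M : ∀ k, Matrix (Fin (D k)) (Fin (D k)) ℂ)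
    (hM : ∀ l ∉ K, M l = 1) (X : Matrix (∀ k, Fin (D k)) (∀ k, Fin (D k)) ℂ) :
    reduceTo K (tensorFamily M * X) = tensorOn K M * reduceTo K X := by
  ext a a'
  rw [Matrix.mul_apply]
  rw [reduceTo_apply]
  have step1 : ∀ b : ∀ k : {k : Fin N // k ∉ K}, Fin (D k.1),
      (tensorFamily M * X) (glue K a b) (glue K a' b)
        = ∑ γ : ∀ k : K, Fin (D k.1), tensorOn K M a γ * X (glue K γ b) (glue K a' b) := by
    intro b
    rw [Matrix.mul_apply]
    rw [← Equiv.sum_comp (Equiv.piEquivPiSubtypeProd (· ∈ K) (fun k => Fin (D k))).symm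
      (fun c => tensorFamily M (glue K a b) c * X c (glue K a' b))]
    rw [Fintype.sum_prod_type]
    rw [show (∑ γ : ∀ k : K, Fin (D k.1), ∑ δ : ∀ k : {k : Fin N // k ∉ K}, Fin (D k.1),
          tensorFamily M (glue K a b)
            ((Equiv.piEquivPiSubtypeProd (· ∈ K) (fun k => Fin (D k))).symm (γ, δ)) *
          X ((Equiv.piEquivPiSubtypeProd (· ∈ K) (fun k => Fin (D k))).symm (γ, δ)) (glue K a' b))
        = ∑ γ : ∀ k : K, Fin (D k.1), ∑ δ : ∀ k : {k : Fin N // k ∉ K}, Fin (D k.1),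
          (tensorOn K M a γ * (if b = δ then 1 else 0)) * X (glue K γ δ) (glue K a' b) from
      Finset.sum_congr rfl fun γ _ => Finset.sum_congr rfl fun δ _ => by
        rw [show (Equiv.piEquivPiSubtypeProd (· ∈ K) (fun k => Fin (D k))).symm (γ, δ)
          = glue K γ δ from rfl]
        rw [show tensorFamily M (glue K a b) (glue K γ δ)
          = ∏ l, M l (glue K a b l) (glue K γ δ l) from rfl]
        rw [glue_prod_eq K M hM a γ b δ]]
    apply Finset.sum_congr rfl
    intro γ _
    rw [Finset.sum_eq_single b]
    · rw [if_pos rfl, mul_one]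
    · intro δ _ hδ
      rw [if_neg (Ne.symm hδ), mul_zero, zero_mul]
    · intro hb
      exact absurd (Finset.mem_univ b) hb
  rw [Finset.sum_congr rfl fun b _ => step1 b]
  rw [Finset.sum_comm]
  apply Finset.sum_congr rfl
  intro γ _
  rw [reduceTo_apply, Finset.mul_sum]

lemma reduceTo_mul_tf (K : Finset (Fin N)) (M : ∀ k, Matrix (Fin (D k)) (Fin (D k)) ℂ)
    (hM : ∀ l ∉ K, M l = 1) (hMh : ∀ l, (M l)ᴴ = M l)
    (X : Matrix (∀ k, Fin (D k)) (∀ k, Fin (D k)) ℂ) :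
    reduceTo K (X * tensorFamily M) = reduceTo K X * tensorOn K M := by
  have h1 : (reduceTo K (X * tensorFamily M))ᴴ = reduceTo K ((X * tensorFamily M)ᴴ) :=
    (reduceTo_conjT K _).symm
  have h2 : (X * tensorFamily M)ᴴ = tensorFamily M * Xᴴ := by
    rw [Matrix.conjTranspose_mul]
    congr 1
    rw [show (tensorFamily M)ᴴ = tensorFamily (fun k => (M k)ᴴ) by
      ext a b
      unfold tensorFamily
      show star (∏ k, M k (b k) (a k)) = _
      rw [star_prod]
      exact Finset.prod_congr rfl fun k _ => rfl]
    exact congrArg _ (funext hMh)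
  have h3 := reduceTo_tf_mul K M hM Xᴴ
  have : (reduceTo K (X * tensorFamily M))ᴴ = tensorOn K M * reduceTo K Xᴴ := by
    rw [h1, h2, h3]
  have h4 := congrArg Matrix.conjTranspose this
  rw [Matrix.conjTranspose_conjTranspose] at h4
  rw [h4, Matrix.conjTranspose_mul, ← reduceTo_conjT, Matrix.conjTranspose_conjTranspose]
  congr 1
  rw [show (tensorOn K M)ᴴ = tensorOn K (fun k => (M k)ᴴ) by
    ext a b
    unfold tensorOn
    show star (∏ k : K, M k.1 (b k) (a k)) = _
    rw [star_prod]
    exact Finset.prod_congr rfl fun k _ => rfl]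
  exact congrArg _ (funext hMh)


end
section


variable {N : ℕ} {D : Fin N → ℕ}

def eK (D : Fin N → ℕ) (k : Fin N) : (∀ l : ({k} : Finset (Fin N)), Fin (D l.1)) ≃ Fin (D k) where
  toFun α := α ⟨k, Finset.mem_singleton_self k⟩
  invFun a := fun l => cast (congrArg (fun i => Fin (D i)) (Finset.mem_singleton.mp l.2)).symm a
  left_inv α := by
    funext l
    rcases l with ⟨x, hx⟩
    have hxk : x = k := Finset.mem_singleton.mp hx
    subst hxk
    rfl
  right_inv a := rfl

/-- Transport of the single-factor reduction to `Fin (D k)`. -/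
def rK (k : Fin N) (ϱ : Matrix (∀ l, Fin (D l)) (∀ l, Fin (D l)) ℂ) :
    Matrix (Fin (D k)) (Fin (D k)) ℂ :=
  (reduceTo {k} ϱ).submatrix ⇑(eK D k).symm ⇑(eK D k).symm

lemma tensorOn_singleton (k : Fin N) (M : ∀ l, Matrix (Fin (D l)) (Fin (D l)) ℂ) :
    tensorOn {k} M = (M k).submatrix ⇑(eK D k) ⇑(eK D k) := by
  ext α β
  show (∏ l : ({k} : Finset (Fin N)), M l.1 (α l) (β l)) = M k _ _
  have step1 : (∏ l : ({k} : Finset (Fin N)), M l.1 (α l) (β l))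
      = ∏ l : ({k} : Finset (Fin N)),
        (fun x => if h : x ∈ ({k} : Finset (Fin N)) then M x (α ⟨x, h⟩) (β ⟨x, h⟩) else 1) l.1 :=
    Finset.prod_congr rfl fun l _ => by
      show M (l.1) (α l) (β l)
        = if h : l.1 ∈ ({k} : Finset (Fin N)) then M l.1 (α ⟨l.1, h⟩) (β ⟨l.1, h⟩) else 1
      rw [dif_pos l.2]
  rw [step1, Finset.prod_coe_sort _
    (fun x => if h : x ∈ ({k} : Finset (Fin N)) then M x (α ⟨x, h⟩) (β ⟨x, h⟩) else 1),
    Finset.prod_singleton]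
  rw [dif_pos (Finset.mem_singleton_self k)]
  rfl

lemma reduceTo_singleton_eq (k : Fin N) (ϱ : Matrix (∀ l, Fin (D l)) (∀ l, Fin (D l)) ℂ) :
    reduceTo {k} ϱ = (rK k ϱ).submatrix ⇑(eK D k) ⇑(eK D k) := by
  unfold rK
  rw [Matrix.submatrix_submatrix, Equiv.symm_comp_self, Matrix.submatrix_id_id]

lemma rK_herm (k : Fin N) {ϱ : Matrix (∀ l, Fin (D l)) (∀ l, Fin (D l)) ℂ}
    (h : ϱ.IsHermitian) : (rK k ϱ).IsHermitian := by
  show (rK k ϱ)ᴴ = rK k ϱ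
  unfold rK
  rw [Matrix.conjTranspose_submatrix]
  congr 1
  rw [show (reduceTo {k} ϱ)ᴴ = reduceTo {k} (ϱᴴ) by
    ext a b
    simp [reduceTo, Matrix.conjTranspose_apply, star_sum]]
  rw [h.eq]

lemma rK_mul_submatrix (k : Fin N) (A B : Matrix (Fin (D k)) (Fin (D k)) ℂ) :
    A.submatrix ⇑(eK D k) ⇑(eK D k) * B.submatrix ⇑(eK D k) ⇑(eK D k)
      = (A * B).submatrix ⇑(eK D k) ⇑(eK D k) :=
  Matrix.submatrix_mul_equiv A B _ (eK D k) _


end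
section


variable {N : ℕ} {D : Fin N → ℕ}

lemma single_sub (k : Fin N) (q : ∀ l, Matrix (Fin (D l)) (Fin (D l)) ℂ) :
    tensorFamily (fun l => if l ∈ ({k} : Finset (Fin N)) then 1 - q l else 1)
      = 1 - tensorFamily (fun l => if l ∈ ({k} : Finset (Fin N)) then q l else 1) := by
  ext a b
  rw [Matrix.sub_apply]
  have key : ∀ (F : ∀ l, Matrix (Fin (D l)) (Fin (D l)) ℂ),
      tensorFamily F a b = F k (a k) (b k) * ∏ l ∈ Finset.univ.erase k, F l (a l) (b l) :=
    fun F => (Finset.mul_prod_erase _ _ (Finset.mem_univ k)).symm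
  rw [key, key]
  rw [show (1 : Matrix (∀ l, Fin (D l)) (∀ l, Fin (D l)) ℂ) a b
    = tensorFamily (fun l => (1 : Matrix (Fin (D l)) (Fin (D l)) ℂ)) a b by
      rw [tensorFamily_one]]
  rw [key]
  have hR1 : ∀ l ∈ Finset.univ.erase k,
      (if l ∈ ({k} : Finset (Fin N)) then 1 - q l else 1) (a l) (b l)
        = (1 : Matrix (Fin (D l)) (Fin (D l)) ℂ) (a l) (b l) := by
    intro l hl
    rw [if_neg (by simp [Finset.mem_singleton, (Finset.mem_erase.mp hl).1])]
  have hR2 : ∀ l ∈ Finset.univ.erase k,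
      (if l ∈ ({k} : Finset (Fin N)) then q l else 1) (a l) (b l)
        = (1 : Matrix (Fin (D l)) (Fin (D l)) ℂ) (a l) (b l) := by
    intro l hl
    rw [if_neg (by simp [Finset.mem_singleton, (Finset.mem_erase.mp hl).1])]
  rw [Finset.prod_congr rfl hR1, Finset.prod_congr rfl hR2]
  rw [if_pos (Finset.mem_singleton_self k), if_pos (Finset.mem_singleton_self k)]
  rw [Matrix.sub_apply]
  ring

lemma absorb (ϱ : Matrix (∀ l, Fin (D l)) (∀ l, Fin (D l)) ℂ)
    (q : ∀ l, Matrix (Fin (D l)) (Fin (D l)) ℂ)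
    (h : ∀ k, ϱ * tensorFamily (fun l => if l ∈ ({k} : Finset (Fin N)) then q l else 1) = ϱ) :
    ϱ * tensorFamily q = ϱ := by
  have main : ∀ S : Finset (Fin N),
      ϱ * tensorFamily (fun l => if l ∈ S then q l else 1) = ϱ := by
    intro S
    induction S using Finset.induction_on with
    | empty =>
      rw [show (fun l => if l ∈ (∅ : Finset (Fin N)) then q l else 1)
        = fun l => (1 : Matrix (Fin (D l)) (Fin (D l)) ℂ) from
        funext fun l => if_neg (Finset.notMem_empty l)]
      rw [tensorFamily_one, Matrix.mul_one]
    | @insert k S hk ih =>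
      have split : tensorFamily (fun l => if l ∈ insert k S then q l else 1)
          = tensorFamily (fun l => if l ∈ ({k} : Finset (Fin N)) then q l else 1)
            * tensorFamily (fun l => if l ∈ S then q l else 1) := by
        rw [tensorFamily_mul]
        apply congrArg tensorFamily
        funext l
        by_cases h1 : l = k
        · subst h1
          rw [if_pos (Finset.mem_singleton_self l), if_neg hk,
            if_pos (Finset.mem_insert_self l S), Matrix.mul_one]
        · have hns : l ∉ ({k} : Finset (Fin N)) := by simp [h1]
          rw [if_neg hns, Matrix.one_mul]
          by_cases h2 : l ∈ S
          · rw [if_pos h2, if_pos (Finset.mem_insert_of_mem h2)]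
          · rw [if_neg h2, if_neg (show l ∉ insert k S by simp [h1, h2])]
      rw [split, ← Matrix.mul_assoc, h k, ih]
  have := main Finset.univ
  rwa [show (fun l => if l ∈ Finset.univ then q l else 1) = q from
    funext fun l => if_pos (Finset.mem_univ l)] at this


end
section
variable {N : ℕ} {D : Fin N → ℕ}

lemma slot_absorb {ϱ : Matrix (∀ l, Fin (D l)) (∀ l, Fin (D l)) ℂ} (hϱ : ϱ.PosSemidef)
    (k : Fin N) (q : ∀ l, Matrix (Fin (D l)) (Fin (D l)) ℂ)
    (hmul : q k * rK k ϱ = rK k ϱ) (hherm : (q k)ᴴ = q k) :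
    ϱ * tensorFamily (fun l => if l ∈ ({k} : Finset (Fin N)) then q l else 1) = ϱ := by
  set f : ∀ l, Matrix (Fin (D l)) (Fin (D l)) ℂ :=
    fun l => if l ∈ ({k} : Finset (Fin N)) then q l else 1 with hf
  set f' : ∀ l, Matrix (Fin (D l)) (Fin (D l)) ℂ :=
    fun l => if l ∈ ({k} : Finset (Fin N)) then 1 - q l else 1 with hf'
  have hf'k : f' k = 1 - q k := if_pos (Finset.mem_singleton_self k)
  have hf'1 : ∀ l ∉ ({k} : Finset (Fin N)), f' l = 1 := fun l hl => if_neg hl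
  have hf'h : ∀ l, (f' l)ᴴ = f' l := by
    intro l
    by_cases hl : l ∈ ({k} : Finset (Fin N))
    · have hlk : l = k := Finset.mem_singleton.mp hl
      subst hlk
      rw [hf'k, Matrix.conjTranspose_sub, Matrix.conjTranspose_one, hherm]
    · rw [show f' l = 1 from if_neg hl, Matrix.conjTranspose_one]
  have hsub : tensorFamily f' = 1 - tensorFamily f := single_sub k q
  have hE'h : (tensorFamily f')ᴴ = tensorFamily f' := by
    rw [tensorFamily_conjT]
    exact congrArg tensorFamily (funext hf'h)
  have hA : ((tensorFamily f')ᴴ * ϱ * tensorFamily f').PosSemidef :=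
    hϱ.conjTranspose_mul_mul_same _
  rw [hE'h] at hA
  have hrq : rK k ϱ * q k = rK k ϱ := by
    have h := congrArg Matrix.conjTranspose hmul
    rwa [Matrix.conjTranspose_mul, hherm, (rK_herm k hϱ.1).eq] at h
  have hred : reduceTo {k} (tensorFamily f' * ϱ * tensorFamily f') = 0 := by
    rw [Matrix.mul_assoc, reduceTo_tf_mul _ f' hf'1, reduceTo_mul_tf _ f' hf'1 hf'h,
      tensorOn_singleton k f', reduceTo_singleton_eq k ϱ,
      rK_mul_submatrix k (rK k ϱ) (f' k), rK_mul_submatrix k (f' k) (rK k ϱ * f' k)]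
    have hz : f' k * (rK k ϱ * f' k) = 0 := by
      rw [hf'k, Matrix.mul_sub, Matrix.mul_one, hrq, sub_self, Matrix.mul_zero]
    rw [hz]
    ext a b
    simp
  have htr : (tensorFamily f' * ϱ * tensorFamily f').trace = 0 := by
    rw [← trace_reduceTo {k} _, hred, Matrix.trace_zero]
  have hA0 : tensorFamily f' * ϱ * tensorFamily f' = 0 :=
    psd_eq_zero_of_trace_eq_zero hA htr
  have hzero : ϱ * tensorFamily f' = 0 := psd_sandwich_zero hϱ hE'h hA0
  rw [hsub, Matrix.mul_sub, Matrix.mul_one] at hzero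
  exact (sub_eq_zero.mp hzero).symm

lemma full_absorb {ϱ : Matrix (∀ l, Fin (D l)) (∀ l, Fin (D l)) ℂ} (hϱ : ϱ.PosSemidef)
    (q : ∀ l, Matrix (Fin (D l)) (Fin (D l)) ℂ)
    (hmul : ∀ k, q k * rK k ϱ = rK k ϱ) (hherm : ∀ k, (q k)ᴴ = q k) :
    tensorFamily q * ϱ * tensorFamily q = ϱ := by
  have h1 : ϱ * tensorFamily q = ϱ :=
    absorb ϱ q (fun k => slot_absorb hϱ k q (hmul k) (hherm k))
  have hqh : (tensorFamily q)ᴴ = tensorFamily q := by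
    rw [tensorFamily_conjT]
    exact congrArg tensorFamily (funext hherm)
  have h2 : tensorFamily q * ϱ = ϱ := by
    have h := congrArg Matrix.conjTranspose h1
    rwa [Matrix.conjTranspose_mul, hqh, hϱ.1.eq] at h
  rw [Matrix.mul_assoc, h1, h2]

end

end SBSAux

open SBSAux in
/-- Generalized SBS theorem: Bohr non-disturbance of a product projective measurement
(objectivity) is equivalent to the generalized Spectrum Broadcast Structure. -/
theorem stmt_7 {d N : ℕ} {D : Fin N → ℕ}
    (ρ : Matrix (Fin d × ∀ k, Fin (D k)) (Fin d × ∀ k, Fin (D k)) ℂ)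
    (hρ : IsDensityMatrix ρ) :
    (∃ (m : ℕ) (e : Fin m → Fin d → ℂ)
        (P : ∀ k : Fin N, Fin m → Matrix (Fin (D k)) (Fin (D k)) ℂ),
        OrthonormalFamily e ∧
        (∀ k i, P k i * P k i = P k i) ∧
        (∀ k i, (P k i)ᴴ = P k i) ∧
        (∀ k, ∀ i j, i ≠ j → P k i * P k j = 0) ∧
        ∑ i, (ketBra (e i) (e i) ⊗ₖ tensorFamily (fun k => P k i)) * ρ *
            (ketBra (e i) (e i) ⊗ₖ tensorFamily (fun k => P k i)) = ρ)
    ↔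
    (∃ (m : ℕ) (e : Fin m → Fin d → ℂ) (p : Fin m → ℝ)
        (ϱ : Fin m → Matrix (∀ k, Fin (D k)) (∀ k, Fin (D k)) ℂ),
        OrthonormalFamily e ∧
        (∀ i, 0 ≤ p i) ∧ (∑ i, p i = 1) ∧
        (∀ i, IsDensityMatrix (ϱ i)) ∧
        ρ = ∑ i, (p i : ℂ) • (ketBra (e i) (e i) ⊗ₖ ϱ i) ∧
        (∀ K : Finset (Fin N), K.Nonempty → ∀ i j, i ≠ j → 0 < p i → 0 < p j →
          reduceTo K (ϱ i) * reduceTo K (ϱ j) = 0)) := by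
  constructor
  · rintro ⟨m, e, P, horth, hproj, hherm, horthP, hsum⟩
    classical
    have hne : Nonempty (Fin d × ∀ k, Fin (D k)) := by
      by_contra h
      rw [not_nonempty_iff] at h
      have h0 := hρ.2
      rw [Matrix.trace_eq_zero_of_isEmpty] at h0
      exact one_ne_zero h0.symm
    haveI hneE : Nonempty (∀ k, Fin (D k)) := ⟨hne.some.2⟩
    have hcard : ((Fintype.card (∀ k, Fin (D k)) : ℝ) : ℂ) ≠ 0 := by
      exact Complex.ofReal_ne_zero.mpr (Nat.cast_ne_zero.mpr Fintype.card_ne_zero)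
    have hvv : ∀ i, star (e i) ⬝ᵥ e i = 1 := fun i => by
      have h := horth i i; rwa [if_pos rfl] at h
    have hkB2 : ∀ i, ketBra (e i) (e i) * ketBra (e i) (e i) = ketBra (e i) (e i) := fun i => by
      rw [ketBra_mul_ketBra, hvv i, one_smul]
    have hT2 : ∀ i, tensorFamily (fun k => P k i) * tensorFamily (fun k => P k i)
        = tensorFamily (fun k => P k i) := fun i => by
      rw [tensorFamily_mul]; exact congrArg tensorFamily (funext fun k => hproj k i)
    have hTh : ∀ i, (tensorFamily (fun k => P k i))ᴴ = tensorFamily (fun k => P k i) :=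
      fun i => by
      rw [tensorFamily_conjT]; exact congrArg tensorFamily (funext fun k => hherm k i)
    have hQh : ∀ i, (ketBra (e i) (e i) ⊗ₖ tensorFamily (fun k => P k i))ᴴ
        = ketBra (e i) (e i) ⊗ₖ tensorFamily (fun k => P k i) := fun i => by
      rw [kron_conjT, ketBra_herm, hTh i]
    have hW_psd : ∀ i, ((ketBra (e i) (e i) ⊗ₖ tensorFamily (fun k => P k i)) * ρ *
        (ketBra (e i) (e i) ⊗ₖ tensorFamily (fun k => P k i))).PosSemidef := fun i => by
      have h := hρ.1.conjTranspose_mul_mul_same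
        (ketBra (e i) (e i) ⊗ₖ tensorFamily (fun k => P k i))
      rwa [hQh i] at h
    -- the unnormalized environment states
    set σ : Fin m → Matrix (∀ k, Fin (D k)) (∀ k, Fin (D k)) ℂ := fun i =>
      unP ((replicateCol Unit (e i) ⊗ₖ (1 : Matrix (∀ k, Fin (D k)) (∀ k, Fin (D k)) ℂ))ᴴ *
        ((ketBra (e i) (e i) ⊗ₖ tensorFamily (fun k => P k i)) * ρ *
          (ketBra (e i) (e i) ⊗ₖ tensorFamily (fun k => P k i))) *
        (replicateCol Unit (e i) ⊗ₖ (1 : Matrix (∀ k, Fin (D k)) (∀ k, Fin (D k)) ℂ))) with hσdef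
    have hσ_psd : ∀ i, (σ i).PosSemidef := fun i =>
      unP_posSemidef ((hW_psd i).conjTranspose_mul_mul_same _)
    have hBh : ∀ i, (replicateCol Unit (e i) ⊗ₖ (1 : Matrix (∀ k, Fin (D k)) (∀ k, Fin (D k)) ℂ))ᴴ
        = (replicateCol Unit (e i))ᴴ ⊗ₖ (1 : Matrix (∀ k, Fin (D k)) (∀ k, Fin (D k)) ℂ) := fun i => by
      rw [kron_conjT, Matrix.conjTranspose_one]
    have hBB : ∀ i, (replicateCol Unit (e i) ⊗ₖ (1 : Matrix (∀ k, Fin (D k)) (∀ k, Fin (D k)) ℂ)) *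
        (replicateCol Unit (e i) ⊗ₖ (1 : Matrix (∀ k, Fin (D k)) (∀ k, Fin (D k)) ℂ))ᴴ
        = ketBra (e i) (e i) ⊗ₖ (1 : Matrix (∀ k, Fin (D k)) (∀ k, Fin (D k)) ℂ) := fun i => by
      rw [hBh i, ← Matrix.mul_kronecker_mul, Matrix.one_mul, ← ketBra_eq]
    have hQkB : ∀ i, (ketBra (e i) (e i) ⊗ₖ tensorFamily (fun k => P k i)) *
        (ketBra (e i) (e i) ⊗ₖ (1 : Matrix (∀ k, Fin (D k)) (∀ k, Fin (D k)) ℂ))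
        = ketBra (e i) (e i) ⊗ₖ tensorFamily (fun k => P k i) := fun i => by
      rw [← Matrix.mul_kronecker_mul, hkB2 i, Matrix.mul_one]
    have hkBQ : ∀ i, (ketBra (e i) (e i) ⊗ₖ (1 : Matrix (∀ k, Fin (D k)) (∀ k, Fin (D k)) ℂ)) *
        (ketBra (e i) (e i) ⊗ₖ tensorFamily (fun k => P k i))
        = ketBra (e i) (e i) ⊗ₖ tensorFamily (fun k => P k i) := fun i => by
      rw [← Matrix.mul_kronecker_mul, hkB2 i, Matrix.one_mul]
    -- reconstruction of Q ρ Q as a Kronecker product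
    have hQQ : ∀ i, (ketBra (e i) (e i) ⊗ₖ tensorFamily (fun k => P k i)) * ρ *
        (ketBra (e i) (e i) ⊗ₖ tensorFamily (fun k => P k i))
        = ketBra (e i) (e i) ⊗ₖ σ i := by
      intro i
      set Q := ketBra (e i) (e i) ⊗ₖ tensorFamily (fun k => P k i) with hQdef
      set B := replicateCol Unit (e i) ⊗ₖ (1 : Matrix (∀ k, Fin (D k)) (∀ k, Fin (D k)) ℂ) with hBdef
      have hW1 : Q * ρ * Q = B * (Bᴴ * (Q * ρ * Q) * B) * Bᴴ := by
        calc Q * ρ * Q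
            = (ketBra (e i) (e i) ⊗ₖ 1) * (Q * ρ * Q) * (ketBra (e i) (e i) ⊗ₖ 1) := by
              rw [show (ketBra (e i) (e i) ⊗ₖ (1:Matrix (∀ k, Fin (D k)) (∀ k, Fin (D k)) ℂ)) *
                  (Q * ρ * Q) * (ketBra (e i) (e i) ⊗ₖ 1)
                  = ((ketBra (e i) (e i) ⊗ₖ 1) * Q) * ρ * (Q * (ketBra (e i) (e i) ⊗ₖ 1)) by
                simp only [Matrix.mul_assoc]]
              rw [hkBQ i, hQkB i]
          _ = (B * Bᴴ) * (Q * ρ * Q) * (B * Bᴴ) := by rw [hBB i]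
          _ = B * (Bᴴ * (Q * ρ * Q) * B) * Bᴴ := by simp only [Matrix.mul_assoc]
      have hexp : (1 : Matrix Unit Unit ℂ) ⊗ₖ σ i = Bᴴ * (Q * ρ * Q) * B := by
        rw [hσdef]
        exact punit_expand _
      calc Q * ρ * Q = B * (Bᴴ * (Q * ρ * Q) * B) * Bᴴ := hW1
        _ = B * ((1 : Matrix Unit Unit ℂ) ⊗ₖ σ i) * Bᴴ := by rw [hexp]
        _ = (replicateCol Unit (e i) ⊗ₖ σ i) * Bᴴ := by
            rw [hBdef, ← Matrix.mul_kronecker_mul, Matrix.mul_one, Matrix.one_mul]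
        _ = ketBra (e i) (e i) ⊗ₖ σ i := by
            rw [hBh i, ← Matrix.mul_kronecker_mul, Matrix.mul_one, ← ketBra_eq]
    -- invariance of σ under the projectors
    have hσT : ∀ i, σ i = tensorFamily (fun k => P k i) * σ i * tensorFamily (fun k => P k i) := by
      intro i
      set Q := ketBra (e i) (e i) ⊗ₖ tensorFamily (fun k => P k i) with hQdef
      set B := replicateCol Unit (e i) ⊗ₖ (1 : Matrix (∀ k, Fin (D k)) (∀ k, Fin (D k)) ℂ) with hBdef
      have h1T : ((1 : Matrix (Fin d) (Fin d) ℂ) ⊗ₖ tensorFamily (fun k => P k i)) * Q = Q := by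
        rw [hQdef, ← Matrix.mul_kronecker_mul, Matrix.one_mul, hT2 i]
      have hT1 : Q * ((1 : Matrix (Fin d) (Fin d) ℂ) ⊗ₖ tensorFamily (fun k => P k i)) = Q := by
        rw [hQdef, ← Matrix.mul_kronecker_mul, Matrix.mul_one, hT2 i]
      have hWT : Q * ρ * Q = ((1 : Matrix (Fin d) (Fin d) ℂ) ⊗ₖ tensorFamily (fun k => P k i)) *
          (Q * ρ * Q) * ((1 : Matrix (Fin d) (Fin d) ℂ) ⊗ₖ tensorFamily (fun k => P k i)) := by
        rw [show ((1 : Matrix (Fin d) (Fin d) ℂ) ⊗ₖ tensorFamily (fun k => P k i)) *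
            (Q * ρ * Q) * ((1 : Matrix (Fin d) (Fin d) ℂ) ⊗ₖ tensorFamily (fun k => P k i))
            = (((1 : Matrix (Fin d) (Fin d) ℂ) ⊗ₖ tensorFamily (fun k => P k i)) * Q) * ρ *
              (Q * ((1 : Matrix (Fin d) (Fin d) ℂ) ⊗ₖ tensorFamily (fun k => P k i))) by
          simp only [Matrix.mul_assoc]]
        rw [h1T, hT1]
      have hBT : Bᴴ * ((1 : Matrix (Fin d) (Fin d) ℂ) ⊗ₖ tensorFamily (fun k => P k i))
          = ((1 : Matrix Unit Unit ℂ) ⊗ₖ tensorFamily (fun k => P k i)) * Bᴴ := by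
        rw [hBdef, kron_conjT, Matrix.conjTranspose_one,
          ← Matrix.mul_kronecker_mul, ← Matrix.mul_kronecker_mul,
          Matrix.mul_one, Matrix.one_mul, Matrix.mul_one, Matrix.one_mul]
      have hTB : ((1 : Matrix (Fin d) (Fin d) ℂ) ⊗ₖ tensorFamily (fun k => P k i)) * B
          = B * ((1 : Matrix Unit Unit ℂ) ⊗ₖ tensorFamily (fun k => P k i)) := by
        rw [hBdef, ← Matrix.mul_kronecker_mul, ← Matrix.mul_kronecker_mul,
          Matrix.mul_one, Matrix.one_mul, Matrix.mul_one, Matrix.one_mul]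
      have hmid : Bᴴ * (Q * ρ * Q) * B
          = ((1 : Matrix Unit Unit ℂ) ⊗ₖ tensorFamily (fun k => P k i)) *
            (Bᴴ * (Q * ρ * Q) * B) *
            ((1 : Matrix Unit Unit ℂ) ⊗ₖ tensorFamily (fun k => P k i)) := by
        conv_lhs => rw [hWT]
        calc Bᴴ * (((1 : Matrix (Fin d) (Fin d) ℂ) ⊗ₖ tensorFamily (fun k => P k i)) *
              (Q * ρ * Q) * ((1 : Matrix (Fin d) (Fin d) ℂ) ⊗ₖ tensorFamily (fun k => P k i))) * B
            = (Bᴴ * ((1 : Matrix (Fin d) (Fin d) ℂ) ⊗ₖ tensorFamily (fun k => P k i))) *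
              (Q * ρ * Q) * (((1 : Matrix (Fin d) (Fin d) ℂ) ⊗ₖ tensorFamily (fun k => P k i)) * B)
              := by simp only [Matrix.mul_assoc]
          _ = (((1 : Matrix Unit Unit ℂ) ⊗ₖ tensorFamily (fun k => P k i)) * Bᴴ) *
              (Q * ρ * Q) * (B * ((1 : Matrix Unit Unit ℂ) ⊗ₖ tensorFamily (fun k => P k i)))
              := by rw [hBT, hTB]
          _ = ((1 : Matrix Unit Unit ℂ) ⊗ₖ tensorFamily (fun k => P k i)) *
              (Bᴴ * (Q * ρ * Q) * B) *
              ((1 : Matrix Unit Unit ℂ) ⊗ₖ tensorFamily (fun k => P k i)) := by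
              simp only [Matrix.mul_assoc]
      have : σ i = unP (Bᴴ * (Q * ρ * Q) * B) := by rw [hσdef]
      rw [this]
      conv_lhs => rw [hmid]
      rw [unP_mul, unP_mul, unP_one_kron]
    -- traces
    have htrW : ∀ i, ((ketBra (e i) (e i) ⊗ₖ tensorFamily (fun k => P k i)) * ρ *
        (ketBra (e i) (e i) ⊗ₖ tensorFamily (fun k => P k i))).trace = (σ i).trace := fun i => by
      rw [hQQ i, Matrix.trace_kronecker, trace_ketBra, hvv i, one_mul]
    have hsum_tr : ∑ i, (σ i).trace = 1 := by
      have h := congrArg Matrix.trace hsum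
      rw [Matrix.trace_sum] at h
      rw [← hρ.2, ← h]
      exact Finset.sum_congr rfl fun i _ => (htrW i).symm
    set p : Fin m → ℝ := fun i => (σ i).trace.re with hpdef
    have hcoe : ∀ i, ((p i : ℝ) : ℂ) = (σ i).trace := fun i => (psd_trace_coe_re (hσ_psd i)).1
    have hp0 : ∀ i, 0 ≤ p i := fun i => (psd_trace_coe_re (hσ_psd i)).2
    have hp1 : ∑ i, p i = 1 := by
      have h : ((∑ i, p i : ℝ) : ℂ) = 1 := by
        rw [Complex.ofReal_sum]
        rw [Finset.sum_congr rfl fun i _ => hcoe i]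
        exact hsum_tr
      exact_mod_cast h
    have hσ0 : ∀ i, ¬ 0 < p i → σ i = 0 := by
      intro i hi
      apply psd_eq_zero_of_trace_eq_zero (hσ_psd i)
      rw [← hcoe i, show p i = 0 from le_antisymm (not_lt.mp hi) (hp0 i), Complex.ofReal_zero]
    refine ⟨m, e, p, fun i => if 0 < p i then ((p i : ℝ) : ℂ)⁻¹ • σ i
      else ((Fintype.card (∀ k, Fin (D k)) : ℝ) : ℂ)⁻¹ • 1, horth, hp0, hp1, ?_, ?_, ?_⟩
    · -- densities
      intro i
      beta_reduce
      by_cases hi : 0 < p i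
      · rw [if_pos hi]
        constructor
        · rw [show ((p i : ℝ) : ℂ)⁻¹ = (((p i)⁻¹ : ℝ) : ℂ) by rw [Complex.ofReal_inv]]
          exact psd_smul_real (hσ_psd i) (inv_nonneg.mpr (hp0 i))
        · rw [Matrix.trace_smul, smul_eq_mul, ← hcoe i]
          exact inv_mul_cancel₀ (Complex.ofReal_ne_zero.mpr (ne_of_gt hi))
      · rw [if_neg hi]
        constructor
        · rw [show ((Fintype.card (∀ k, Fin (D k)) : ℝ) : ℂ)⁻¹
            = (((Fintype.card (∀ k, Fin (D k)) : ℝ)⁻¹ : ℝ) : ℂ) by rw [Complex.ofReal_inv]]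
          exact psd_smul_real Matrix.PosSemidef.one (inv_nonneg.mpr (Nat.cast_nonneg _))
        · rw [Matrix.trace_smul, Matrix.trace_one]
          rw [smul_eq_mul]
          rw [show ((Fintype.card (∀ k, Fin (D k)) : ℕ) : ℂ)
            = ((Fintype.card (∀ k, Fin (D k)) : ℝ) : ℂ) by push_cast; ring]
          exact inv_mul_cancel₀ hcard
    · -- representation
      beta_reduce
      rw [← hsum]
      apply Finset.sum_congr rfl
      intro i _
      rw [hQQ i]
      by_cases hi : 0 < p i
      · rw [if_pos hi, Matrix.kronecker_smul, smul_smul,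
          mul_inv_cancel₀ (by rw [hcoe i]; rw [← hcoe i]; exact_mod_cast ne_of_gt hi), one_smul]
      · rw [if_neg hi, hσ0 i hi]
        rw [show p i = 0 from le_antisymm (not_lt.mp hi) (hp0 i)]
        simp
    · -- orthogonality of reductions
      intro K hK i j hij hpi hpj
      beta_reduce
      rw [if_pos hpi, if_pos hpj]
      rw [reduceTo_smul, reduceTo_smul, Matrix.smul_mul, Matrix.mul_smul, smul_smul]
      suffices h : reduceTo K (σ i) * reduceTo K (σ j) = 0 by rw [h, smul_zero]
      have h1off : ∀ i' l, l ∉ K → (fun l => if l ∈ K then P l i' else 1) l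
          = (1 : Matrix (Fin (D l)) (Fin (D l)) ℂ) := fun i' l hl => if_neg hl
      have hMh : ∀ i' l, ((fun l => if l ∈ K then P l i' else 1) l)ᴴ
          = (fun l => if l ∈ K then P l i' else 1) l := by
        intro i' l
        by_cases hl : l ∈ K
        · simp only [if_pos hl]; exact hherm l i'
        · simp only [if_neg hl]; exact Matrix.conjTranspose_one
      have hsplit : ∀ i', tensorFamily (fun k => P k i')
          = tensorFamily (fun l => if l ∈ K then P l i' else 1) *
            tensorFamily (fun l => if l ∈ K then 1 else P l i') := by
        intro i'
        rw [tensorFamily_mul]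
        apply congrArg tensorFamily
        funext l
        by_cases hl : l ∈ K
        · rw [if_pos hl, if_pos hl, Matrix.mul_one]
        · rw [if_neg hl, if_neg hl, Matrix.one_mul]
      have hsplit' : ∀ i', tensorFamily (fun k => P k i')
          = tensorFamily (fun l => if l ∈ K then 1 else P l i') *
            tensorFamily (fun l => if l ∈ K then P l i' else 1) := by
        intro i'
        rw [tensorFamily_mul]
        apply congrArg tensorFamily
        funext l
        by_cases hl : l ∈ K
        · rw [if_pos hl, if_pos hl, Matrix.one_mul]
        · rw [if_neg hl, if_neg hl, Matrix.mul_one]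
      have hred : ∀ i', reduceTo K (σ i')
          = tensorOn K (fun l => if l ∈ K then P l i' else 1) *
            (reduceTo K (tensorFamily (fun l => if l ∈ K then 1 else P l i') * σ i' *
              tensorFamily (fun l => if l ∈ K then 1 else P l i')) *
            tensorOn K (fun l => if l ∈ K then P l i' else 1)) := by
        intro i'
        conv_lhs => rw [hσT i']
        rw [show tensorFamily (fun k => P k i') * σ i' * tensorFamily (fun k => P k i')
            = tensorFamily (fun l => if l ∈ K then P l i' else 1) *
              ((tensorFamily (fun l => if l ∈ K then 1 else P l i') * σ i' *
                tensorFamily (fun l => if l ∈ K then 1 else P l i')) *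
               tensorFamily (fun l => if l ∈ K then P l i' else 1)) by
          rw [hsplit i']
          nth_rewrite 2 [show tensorFamily (fun l => if l ∈ K then P l i' else 1) *
              tensorFamily (fun l => if l ∈ K then 1 else P l i')
              = tensorFamily (fun l => if l ∈ K then 1 else P l i') *
                tensorFamily (fun l => if l ∈ K then P l i' else 1) from
            (hsplit i').symm.trans (hsplit' i')]
          simp only [Matrix.mul_assoc]]
        rw [reduceTo_tf_mul K _ (h1off i'), reduceTo_mul_tf K _ (h1off i') (hMh i')]
      have hPP : tensorOn K (fun l => if l ∈ K then P l i else 1) *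
          tensorOn K (fun l => if l ∈ K then P l j else 1) = 0 := by
        rw [tensorOn_mul]
        apply tensorOn_eq_zero hK
        intro l hl
        simp only [if_pos hl]
        exact horthP l i j hij
      rw [hred i, hred j]
      rw [show tensorOn K (fun l => if l ∈ K then P l i else 1) *
          (reduceTo K (tensorFamily (fun l => if l ∈ K then 1 else P l i) * σ i *
            tensorFamily (fun l => if l ∈ K then 1 else P l i)) *
           tensorOn K (fun l => if l ∈ K then P l i else 1)) *
          (tensorOn K (fun l => if l ∈ K then P l j else 1) *
          (reduceTo K (tensorFamily (fun l => if l ∈ K then 1 else P l j) * σ j *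
            tensorFamily (fun l => if l ∈ K then 1 else P l j)) *
           tensorOn K (fun l => if l ∈ K then P l j else 1)))
          = tensorOn K (fun l => if l ∈ K then P l i else 1) *
            (reduceTo K (tensorFamily (fun l => if l ∈ K then 1 else P l i) * σ i *
              tensorFamily (fun l => if l ∈ K then 1 else P l i)) *
            ((tensorOn K (fun l => if l ∈ K then P l i else 1) *
              tensorOn K (fun l => if l ∈ K then P l j else 1)) *
            (reduceTo K (tensorFamily (fun l => if l ∈ K then 1 else P l j) * σ j *
              tensorFamily (fun l => if l ∈ K then 1 else P l j)) *
             tensorOn K (fun l => if l ∈ K then P l j else 1)))) by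
        simp only [Matrix.mul_assoc]]
      rw [hPP, Matrix.zero_mul, Matrix.mul_zero, Matrix.mul_zero]
  · rintro ⟨m, e, p, ϱ, horth, hp0, hp1, hdens, hrep, horthK⟩
    classical
    refine ⟨m, e, fun k i => if h : 0 < p i then suppProj (rK_herm k (hdens i).1.1) else 0,
      horth, ?_, ?_, ?_, ?_⟩
    · intro k i
      beta_reduce
      by_cases h : 0 < p i
      · rw [dif_pos h, suppProj_idem]
      · rw [dif_neg h, Matrix.mul_zero]
    · intro k i
      beta_reduce
      by_cases h : 0 < p i
      · rw [dif_pos h, suppProj_herm]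
      · rw [dif_neg h, Matrix.conjTranspose_zero]
    · intro k i j hij
      beta_reduce
      by_cases hi : 0 < p i
      · by_cases hj : 0 < p j
        · rw [dif_pos hi, dif_pos hj]
          have hrr : rK k (ϱ i) * rK k (ϱ j) = 0 := by
            unfold rK
            rw [Matrix.submatrix_mul_equiv (reduceTo {k} (ϱ i)) (reduceTo {k} (ϱ j))
              ⇑(eK D k).symm ((eK D k).symm) ⇑(eK D k).symm]
            rw [horthK {k} (Finset.singleton_nonempty k) i j hij hi hj]
            ext a b
            simp
          have h1 : suppProj (rK_herm k (hdens i).1.1) * rK k (ϱ j) = 0 :=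
            suppProj_mul_eq_zero _ hrr
          have h2 : rK k (ϱ j) * suppProj (rK_herm k (hdens i).1.1) = 0 := by
            have h := congrArg Matrix.conjTranspose h1
            rwa [Matrix.conjTranspose_mul, suppProj_herm, (rK_herm k (hdens j).1.1).eq,
              Matrix.conjTranspose_zero] at h
          have h3 : suppProj (rK_herm k (hdens j).1.1) *
              suppProj (rK_herm k (hdens i).1.1) = 0 :=
            suppProj_mul_eq_zero _ h2
          have h4 := congrArg Matrix.conjTranspose h3
          rwa [Matrix.conjTranspose_mul, suppProj_herm, suppProj_herm,
            Matrix.conjTranspose_zero] at h4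
        · rw [dif_neg hj, Matrix.mul_zero]
      · rw [dif_neg hi, Matrix.zero_mul]
    · -- the sum
      beta_reduce
      have hterm : ∀ i : Fin m,
          (ketBra (e i) (e i) ⊗ₖ tensorFamily (fun k =>
              if h : 0 < p i then suppProj (rK_herm k (hdens i).1.1) else 0)) * ρ *
            (ketBra (e i) (e i) ⊗ₖ tensorFamily (fun k =>
              if h : 0 < p i then suppProj (rK_herm k (hdens i).1.1) else 0))
          = (p i : ℂ) • (ketBra (e i) (e i) ⊗ₖ ϱ i) := by
        intro i
        set T : Matrix (∀ k, Fin (D k)) (∀ k, Fin (D k)) ℂ :=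
          tensorFamily (fun k => if h : 0 < p i then suppProj (rK_herm k (hdens i).1.1) else 0)
          with hT
        rw [hrep, Finset.mul_sum, Finset.sum_mul]
        have hterm2 : ∀ j : Fin m,
            (ketBra (e i) (e i) ⊗ₖ T) * ((p j : ℂ) • (ketBra (e j) (e j) ⊗ₖ ϱ j))
              * (ketBra (e i) (e i) ⊗ₖ T)
            = if j = i then (p i : ℂ) • (ketBra (e i) (e i) ⊗ₖ (T * ϱ i * T)) else 0 := by
          intro j
          rw [Matrix.mul_smul, Matrix.smul_mul]
          rw [← Matrix.mul_kronecker_mul, ← Matrix.mul_kronecker_mul]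
          rw [ketBra_mul_ketBra, horth i j]
          by_cases hji : j = i
          · subst hji
            rw [if_pos rfl, if_pos rfl, one_smul]
            rw [ketBra_mul_ketBra, horth j j, if_pos rfl, one_smul]
          · rw [if_neg (fun h => hji h.symm), if_neg hji, zero_smul, Matrix.zero_mul,
              zero_kronecker, smul_zero]
        rw [Finset.sum_congr rfl (fun j _ => hterm2 j)]
        rw [Finset.sum_ite_eq' Finset.univ i
          (fun _ => (p i : ℂ) • (ketBra (e i) (e i) ⊗ₖ (T * ϱ i * T)))]
        rw [if_pos (Finset.mem_univ i)]
        by_cases hi : 0 < p i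
        · have hq : T = tensorFamily (fun k => suppProj (rK_herm k (hdens i).1.1)) := by
            rw [hT]
            exact congrArg tensorFamily (funext fun k => dif_pos hi)
          rw [hq, full_absorb (hdens i).1 _ (fun k => suppProj_mul_self _)
            (fun k => suppProj_herm _)]
        · have hpz : p i = 0 := le_antisymm (not_lt.mp hi) (hp0 i)
          rw [hpz]
          simp
      calc (∑ i : Fin m, (ketBra (e i) (e i) ⊗ₖ tensorFamily (fun k =>
              if h : 0 < p i then suppProj (rK_herm k (hdens i).1.1) else 0)) * ρ *
            (ketBra (e i) (e i) ⊗ₖ tensorFamily (fun k =>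
              if h : 0 < p i then suppProj (rK_herm k (hdens i).1.1) else 0)))
          = ∑ i : Fin m, (p i : ℂ) • (ketBra (e i) (e i) ⊗ₖ ϱ i) :=
            Finset.sum_congr rfl (fun i _ => hterm i)
        _ = ρ := hrep.symm
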